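/- The number of interval-closed sets of the product of chains [3] × [n] is (n⁶ + 9n⁵ + 61n⁴ + 159n³ + 370n² + 264n + 144)/144. -/

import Mathlib

/-- A subset `I` of a poset is interval-closed if for all `x, y ∈ I` and `z`
with `x < z < y`, we have `z ∈ I`. -/
def IsIntervalClosed {P : Type*} [PartialOrder P] (I : Finset P) : Prop :=
  ∀ x ∈ I, ∀ y ∈ I, ∀ z : P, x < z → z < y → z ∈ I

open Finset

namespace ICS3

/-- Number of tuples `x₀ > ... ` chains: `chainCount m bs` counts tuples
`(x₀, …, x_{k-1})` (`k = bs.length`) with `x₀ < m` and `x_{i+1} < x_i` if `bs_i = true`,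
`x_{i+1} ≤ x_i` if `bs_i = false` (last entry of `bs` unused). -/
def chainCount : ℕ → List Bool → ℕ
  | _, [] => 1
  | m, b :: bs => ∑ x ∈ Finset.range m, chainCount (if b then x else x + 1) bs

lemma chainCount_succ (m : ℕ) (b : Bool) (bs : List Bool) :
    chainCount (m + 1) (b :: bs) =
      chainCount m (b :: bs) + chainCount (if b then m else m + 1) bs := by
  simp [chainCount, Finset.sum_range_succ]

lemma chainCount_zero (b : Bool) (bs : List Bool) : chainCount 0 (b :: bs) = 0 := by
  simp [chainCount]

def chainSet : ℕ → List Bool → Finset (List ℕ)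
  | _, [] => {[]}
  | m, b :: bs => (Finset.range m).biUnion fun x =>
      (chainSet (if b then x else x + 1) bs).image (x :: ·)

lemma card_chainSet : ∀ (bs : List Bool) (m : ℕ), (chainSet m bs).card = chainCount m bs := by
  intro bs
  induction bs with
  | nil => intro m; simp [chainSet, chainCount]
  | cons b bs ih =>
    intro m
    rw [chainSet, chainCount, Finset.card_biUnion]
    · exact Finset.sum_congr rfl fun x _ => by
        rw [Finset.card_image_of_injective _ (fun a b h => by injection h), ih]
    · intro x _ y _ hxy
      simp only [Finset.disjoint_left, Finset.mem_image]
      rintro l ⟨t, _, rfl⟩ ⟨t', _, h⟩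
      injection h with h1 _
      exact hxy h1.symm


lemma chainCount_nil (m : ℕ) : chainCount m [] = 1 := rfl

lemma ch_f (m : ℕ) : (1 : ℤ) * chainCount m [false] = (m : ℤ) := by
  induction m with
  | zero => simp [chainCount_zero]
  | succ k ih =>
    rw [chainCount_succ]
    norm_num
    push_cast [chainCount_nil]
    push_cast at ih
    linear_combination ih

lemma ch_ff (m : ℕ) : (2 : ℤ) * chainCount m [false, false] = (m : ℤ) ^ 2 + (m : ℤ) := by
  induction m with
  | zero => simp [chainCount_zero]
  | succ k ih =>
    have h := ch_f (k + 1)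
    push_cast at h
    rw [chainCount_succ]
    norm_num
    push_cast [chainCount_nil]
    push_cast at ih
    linear_combination ih + 2 * h

lemma ch_fff (m : ℕ) : (6 : ℤ) * chainCount m [false, false, false] = (m : ℤ) ^ 3 + 3 * (m : ℤ) ^ 2 + 2 * (m : ℤ) := by
  induction m with
  | zero => simp [chainCount_zero]
  | succ k ih =>
    have h := ch_ff (k + 1)
    push_cast at h
    rw [chainCount_succ]
    norm_num
    push_cast [chainCount_nil]
    push_cast at ih
    linear_combination ih + 3 * h

lemma ch_tff (m : ℕ) : (6 : ℤ) * chainCount m [true, false, false] = (m : ℤ) ^ 3 - (m : ℤ) := by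
  induction m with
  | zero => simp [chainCount_zero]
  | succ k ih =>
    have h := ch_ff k
    push_cast at h
    rw [chainCount_succ]
    norm_num
    push_cast [chainCount_nil]
    push_cast at ih
    linear_combination ih + 3 * h

lemma ch_ffff (m : ℕ) : (24 : ℤ) * chainCount m [false, false, false, false] = (m : ℤ) ^ 4 + 6 * (m : ℤ) ^ 3 + 11 * (m : ℤ) ^ 2 + 6 * (m : ℤ) := by
  induction m with
  | zero => simp [chainCount_zero]
  | succ k ih =>
    have h := ch_fff (k + 1)
    push_cast at h
    rw [chainCount_succ]
    norm_num
    push_cast [chainCount_nil]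
    push_cast at ih
    linear_combination ih + 4 * h

lemma ch_ftff (m : ℕ) : (24 : ℤ) * chainCount m [false, true, false, false] = (m : ℤ) ^ 4 + 2 * (m : ℤ) ^ 3 - (m : ℤ) ^ 2 - 2 * (m : ℤ) := by
  induction m with
  | zero => simp [chainCount_zero]
  | succ k ih =>
    have h := ch_tff (k + 1)
    push_cast at h
    rw [chainCount_succ]
    norm_num
    push_cast [chainCount_nil]
    push_cast at ih
    linear_combination ih + 4 * h

lemma ch_tfff (m : ℕ) : (24 : ℤ) * chainCount m [true, false, false, false] = (m : ℤ) ^ 4 + 2 * (m : ℤ) ^ 3 - (m : ℤ) ^ 2 - 2 * (m : ℤ) := by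
  induction m with
  | zero => simp [chainCount_zero]
  | succ k ih =>
    have h := ch_fff k
    push_cast at h
    rw [chainCount_succ]
    norm_num
    push_cast [chainCount_nil]
    push_cast at ih
    linear_combination ih + 4 * h

lemma ch_fffff (m : ℕ) : (120 : ℤ) * chainCount m [false, false, false, false, false] = (m : ℤ) ^ 5 + 10 * (m : ℤ) ^ 4 + 35 * (m : ℤ) ^ 3 + 50 * (m : ℤ) ^ 2 + 24 * (m : ℤ) := by
  induction m with
  | zero => simp [chainCount_zero]
  | succ k ih =>
    have h := ch_ffff (k + 1)
    push_cast at h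
    rw [chainCount_succ]
    norm_num
    push_cast [chainCount_nil]
    push_cast at ih
    linear_combination ih + 5 * h

lemma ch_ftfff (m : ℕ) : (120 : ℤ) * chainCount m [false, true, false, false, false] = (m : ℤ) ^ 5 + 5 * (m : ℤ) ^ 4 + 5 * (m : ℤ) ^ 3 - 5 * (m : ℤ) ^ 2 - 6 * (m : ℤ) := by
  induction m with
  | zero => simp [chainCount_zero]
  | succ k ih =>
    have h := ch_tfff (k + 1)
    push_cast at h
    rw [chainCount_succ]
    norm_num
    push_cast [chainCount_nil]
    push_cast at ih
    linear_combination ih + 5 * h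

lemma ch_fftff (m : ℕ) : (120 : ℤ) * chainCount m [false, false, true, false, false] = (m : ℤ) ^ 5 + 5 * (m : ℤ) ^ 4 + 5 * (m : ℤ) ^ 3 - 5 * (m : ℤ) ^ 2 - 6 * (m : ℤ) := by
  induction m with
  | zero => simp [chainCount_zero]
  | succ k ih =>
    have h := ch_ftff (k + 1)
    push_cast at h
    rw [chainCount_succ]
    norm_num
    push_cast [chainCount_nil]
    push_cast at ih
    linear_combination ih + 5 * h

lemma ch_tffff (m : ℕ) : (120 : ℤ) * chainCount m [true, false, false, false, false] = (m : ℤ) ^ 5 + 5 * (m : ℤ) ^ 4 + 5 * (m : ℤ) ^ 3 - 5 * (m : ℤ) ^ 2 - 6 * (m : ℤ) := by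
  induction m with
  | zero => simp [chainCount_zero]
  | succ k ih =>
    have h := ch_ffff k
    push_cast at h
    rw [chainCount_succ]
    norm_num
    push_cast [chainCount_nil]
    push_cast at ih
    linear_combination ih + 5 * h

lemma ch_tftff (m : ℕ) : (120 : ℤ) * chainCount m [true, false, true, false, false] = (m : ℤ) ^ 5 - 5 * (m : ℤ) ^ 3 + 4 * (m : ℤ) := by
  induction m with
  | zero => simp [chainCount_zero]
  | succ k ih =>
    have h := ch_ftff k
    push_cast at h
    rw [chainCount_succ]
    norm_num
    push_cast [chainCount_nil]
    push_cast at ih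
    linear_combination ih + 5 * h

lemma ch_ffffff (m : ℕ) : (720 : ℤ) * chainCount m [false, false, false, false, false, false] = (m : ℤ) ^ 6 + 15 * (m : ℤ) ^ 5 + 85 * (m : ℤ) ^ 4 + 225 * (m : ℤ) ^ 3 + 274 * (m : ℤ) ^ 2 + 120 * (m : ℤ) := by
  induction m with
  | zero => simp [chainCount_zero]
  | succ k ih =>
    have h := ch_fffff (k + 1)
    push_cast at h
    rw [chainCount_succ]
    norm_num
    push_cast [chainCount_nil]
    push_cast at ih
    linear_combination ih + 6 * h

lemma ch_ftffff (m : ℕ) : (720 : ℤ) * chainCount m [false, true, false, false, false, false] = (m : ℤ) ^ 6 + 9 * (m : ℤ) ^ 5 + 25 * (m : ℤ) ^ 4 + 15 * (m : ℤ) ^ 3 - 26 * (m : ℤ) ^ 2 - 24 * (m : ℤ) := by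
  induction m with
  | zero => simp [chainCount_zero]
  | succ k ih =>
    have h := ch_tffff (k + 1)
    push_cast at h
    rw [chainCount_succ]
    norm_num
    push_cast [chainCount_nil]
    push_cast at ih
    linear_combination ih + 6 * h

lemma ch_ffftff (m : ℕ) : (720 : ℤ) * chainCount m [false, false, false, true, false, false] = (m : ℤ) ^ 6 + 9 * (m : ℤ) ^ 5 + 25 * (m : ℤ) ^ 4 + 15 * (m : ℤ) ^ 3 - 26 * (m : ℤ) ^ 2 - 24 * (m : ℤ) := by
  induction m with
  | zero => simp [chainCount_zero]
  | succ k ih =>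
    have h := ch_fftff (k + 1)
    push_cast at h
    rw [chainCount_succ]
    norm_num
    push_cast [chainCount_nil]
    push_cast at ih
    linear_combination ih + 6 * h

lemma ch_fftfff (m : ℕ) : (720 : ℤ) * chainCount m [false, false, true, false, false, false] = (m : ℤ) ^ 6 + 9 * (m : ℤ) ^ 5 + 25 * (m : ℤ) ^ 4 + 15 * (m : ℤ) ^ 3 - 26 * (m : ℤ) ^ 2 - 24 * (m : ℤ) := by
  induction m with
  | zero => simp [chainCount_zero]
  | succ k ih =>
    have h := ch_ftfff (k + 1)
    push_cast at h
    rw [chainCount_succ]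
    norm_num
    push_cast [chainCount_nil]
    push_cast at ih
    linear_combination ih + 6 * h

lemma ch_ftftff (m : ℕ) : (720 : ℤ) * chainCount m [false, true, false, true, false, false] = (m : ℤ) ^ 6 + 3 * (m : ℤ) ^ 5 - 5 * (m : ℤ) ^ 4 - 15 * (m : ℤ) ^ 3 + 4 * (m : ℤ) ^ 2 + 12 * (m : ℤ) := by
  induction m with
  | zero => simp [chainCount_zero]
  | succ k ih =>
    have h := ch_tftff (k + 1)
    push_cast at h
    rw [chainCount_succ]
    norm_num
    push_cast [chainCount_nil]
    push_cast at ih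
    linear_combination ih + 6 * h


def pairsF (n : ℕ) : Finset (ℕ × ℕ) := (range n ×ˢ range n).filter fun p => p.1 ≤ p.2

def osetF (n : ℕ) : Finset (Option (ℕ × ℕ)) := insert none ((pairsF n).image some)

def adjOkB : Option (ℕ × ℕ) → Option (ℕ × ℕ) → Bool
  | some (la, ra), some (lb, rb) => decide (rb < la ∨ (lb ≤ la ∧ la ≤ rb ∧ rb ≤ ra))
  | _, _ => true

def acOkB : Option (ℕ × ℕ) → Option (ℕ × ℕ) → Option (ℕ × ℕ) → Bool
  | some (la, _ra), some (lb, rb), some (lc, rc) =>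
      decide (rc < la ∨ (lc ≤ la ∧ rc ≤ _ra ∧ lb ≤ la ∧ rc ≤ rb))
  | some (la, _), none, some (_, rc) => decide (rc < la)
  | _, _, _ => true

def CondB (d : Option (ℕ × ℕ) × Option (ℕ × ℕ) × Option (ℕ × ℕ)) : Bool :=
  adjOkB d.1 d.2.1 && adjOkB d.2.1 d.2.2 && acOkB d.1 d.2.1 d.2.2

def Tset (n : ℕ) : Finset (Option (ℕ × ℕ) × Option (ℕ × ℕ) × Option (ℕ × ℕ)) :=
  (osetF n ×ˢ osetF n ×ˢ osetF n).filter fun d => CondB d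

lemma mem_pairsF {n : ℕ} {p : ℕ × ℕ} : p ∈ pairsF n ↔ p.1 ≤ p.2 ∧ p.2 < n := by
  simp [pairsF, Finset.mem_filter, Finset.mem_product]; omega

lemma sum_osetF (n : ℕ) (f : Option (ℕ × ℕ) → ℕ) :
    ∑ o ∈ osetF n, f o = f none + ∑ p ∈ pairsF n, f (some p) := by
  rw [osetF, Finset.sum_insert (by simp), Finset.sum_image (by simp)]

lemma sum_ite_card2 (s t : Finset (ℕ × ℕ)) (P : ℕ × ℕ → ℕ × ℕ → Prop) [∀ p q, Decidable (P p q)] :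
    (∑ p ∈ s, ∑ q ∈ t, if P p q then 1 else 0)
      = ((s ×ˢ t).filter fun x => P x.1 x.2).card := by
  rw [Finset.card_filter, Finset.sum_product]

lemma sum_ite_card3 (s t u : Finset (ℕ × ℕ)) (P : ℕ × ℕ → ℕ × ℕ → ℕ × ℕ → Prop)
    [∀ p q r, Decidable (P p q r)] :
    (∑ p ∈ s, ∑ q ∈ t, ∑ r ∈ u, if P p q r then 1 else 0)
      = ((s ×ˢ t ×ˢ u).filter fun x => P x.1 x.2.1 x.2.2).card := by
  rw [Finset.card_filter, Finset.sum_product, ]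
  exact Finset.sum_congr rfl fun p _ => by rw [Finset.sum_product]


lemma mem_chainSet_cons {m : ℕ} {b : Bool} {bs : List Bool} {l : List ℕ} :
    l ∈ chainSet m (b :: bs) ↔
      ∃ x < m, ∃ t ∈ chainSet (if b then x else x + 1) bs, l = x :: t := by
  simp [chainSet, eq_comm]

lemma mem_chainSet_cons_f {m : ℕ} {bs : List Bool} {l : List ℕ} :
    l ∈ chainSet m (false :: bs) ↔ ∃ x < m, ∃ t ∈ chainSet (x + 1) bs, l = x :: t := by
  rw [mem_chainSet_cons]; simp

lemma mem_chainSet_cons_t {m : ℕ} {bs : List Bool} {l : List ℕ} :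
    l ∈ chainSet m (true :: bs) ↔ ∃ x < m, ∃ t ∈ chainSet x bs, l = x :: t := by
  rw [mem_chainSet_cons]; simp

lemma mem_chainSet_nil {m : ℕ} {l : List ℕ} : l ∈ chainSet m [] ↔ l = [] := by
  simp [chainSet]

lemma pairsF_card (n : ℕ) : (pairsF n).card = chainCount n [false, false] := by
  rw [← card_chainSet]
  apply Finset.card_nbij' (i := fun p => [p.2, p.1])
    (j := fun l => (l.getD 1 0, l.getD 0 0))
  · intro p hp
    rw [Finset.mem_coe, mem_pairsF] at hp
    rw [Finset.mem_coe, mem_chainSet_cons_f]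
    exact ⟨p.2, hp.2, [p.1], by simp [mem_chainSet_cons_f, mem_chainSet_cons_t, mem_chainSet_nil]; omega, rfl⟩
  · intro l hl
    simp only [Finset.mem_coe, mem_chainSet_cons_f, mem_chainSet_cons_t, mem_chainSet_nil] at hl
    obtain ⟨x, hx, t, ⟨y, hy, t2, ht2, rfl⟩, rfl⟩ := hl
    simp only [ht2]
    rw [Finset.mem_coe, mem_pairsF]
    constructor <;> simp <;> omega
  · intro p _; rfl
  · intro l hl
    simp only [Finset.mem_coe, mem_chainSet_cons_f, mem_chainSet_cons_t, mem_chainSet_nil] at hl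
    obtain ⟨x, hx, t, ⟨y, hy, t2, ht2, rfl⟩, rfl⟩ := hl
    simp [ht2]


lemma c4a (n : ℕ) :
    ((pairsF n ×ˢ pairsF n).filter fun x => x.2.2 < x.1.1).card
      = chainCount n [false, true, false, false] := by
  rw [← card_chainSet]
  apply Finset.card_nbij' (i := fun x => [x.1.2, x.1.1, x.2.2, x.2.1])
    (j := fun l => ((l.getD 1 0, l.getD 0 0), (l.getD 3 0, l.getD 2 0)))
  · intro x hx
    simp only [Finset.mem_coe, Finset.mem_filter, Finset.mem_product, mem_pairsF] at hx
    simp only [Finset.mem_coe, mem_chainSet_cons_f, mem_chainSet_cons_t, mem_chainSet_nil]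
    refine ⟨_, ?_, _, ⟨_, ?_, _, ⟨_, ?_, _, ⟨_, ?_, [], rfl, rfl⟩, rfl⟩, rfl⟩, rfl⟩ <;> omega
  · intro l hl
    simp only [Finset.mem_coe, mem_chainSet_cons_f, mem_chainSet_cons_t, mem_chainSet_nil] at hl
    obtain ⟨x0, hx0, t0, ht0, rfl⟩ := hl
    obtain ⟨x1, hx1, t1, ht1, rfl⟩ := ht0
    obtain ⟨x2, hx2, t2, ht2, rfl⟩ := ht1
    obtain ⟨x3, hx3, t3, ht3, rfl⟩ := ht2
    subst ht3
    simp only [Finset.mem_coe, Finset.mem_filter, Finset.mem_product, mem_pairsF, List.getD]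
    norm_num
    omega
  · intro x hx; rfl
  · intro l hl
    simp only [Finset.mem_coe, mem_chainSet_cons_f, mem_chainSet_cons_t, mem_chainSet_nil] at hl
    obtain ⟨x0, hx0, t0, ht0, rfl⟩ := hl
    obtain ⟨x1, hx1, t1, ht1, rfl⟩ := ht0
    obtain ⟨x2, hx2, t2, ht2, rfl⟩ := ht1
    obtain ⟨x3, hx3, t3, ht3, rfl⟩ := ht2
    subst ht3
    rfl

lemma c4w (n : ℕ) :
    ((pairsF n ×ˢ pairsF n).filter fun x => x.2.1 ≤ x.1.1 ∧ x.1.1 ≤ x.2.2 ∧ x.2.2 ≤ x.1.2).card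
      = chainCount n [false, false, false, false] := by
  rw [← card_chainSet]
  apply Finset.card_nbij' (i := fun x => [x.1.2, x.2.2, x.1.1, x.2.1])
    (j := fun l => ((l.getD 2 0, l.getD 0 0), (l.getD 3 0, l.getD 1 0)))
  · intro x hx
    simp only [Finset.mem_coe, Finset.mem_filter, Finset.mem_product, mem_pairsF] at hx
    simp only [Finset.mem_coe, mem_chainSet_cons_f, mem_chainSet_cons_t, mem_chainSet_nil]
    refine ⟨_, ?_, _, ⟨_, ?_, _, ⟨_, ?_, _, ⟨_, ?_, [], rfl, rfl⟩, rfl⟩, rfl⟩, rfl⟩ <;> omega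
  · intro l hl
    simp only [Finset.mem_coe, mem_chainSet_cons_f, mem_chainSet_cons_t, mem_chainSet_nil] at hl
    obtain ⟨x0, hx0, t0, ht0, rfl⟩ := hl
    obtain ⟨x1, hx1, t1, ht1, rfl⟩ := ht0
    obtain ⟨x2, hx2, t2, ht2, rfl⟩ := ht1
    obtain ⟨x3, hx3, t3, ht3, rfl⟩ := ht2
    subst ht3
    simp only [Finset.mem_coe, Finset.mem_filter, Finset.mem_product, mem_pairsF, List.getD]
    norm_num
    omega
  · intro x hx; rfl
  · intro l hl
    simp only [Finset.mem_coe, mem_chainSet_cons_f, mem_chainSet_cons_t, mem_chainSet_nil] at hl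
    obtain ⟨x0, hx0, t0, ht0, rfl⟩ := hl
    obtain ⟨x1, hx1, t1, ht1, rfl⟩ := ht0
    obtain ⟨x2, hx2, t2, ht2, rfl⟩ := ht1
    obtain ⟨x3, hx3, t3, ht3, rfl⟩ := ht2
    subst ht3
    rfl

lemma c6_1 (n : ℕ) :
    ((pairsF n ×ˢ pairsF n ×ˢ pairsF n).filter fun x => x.2.2.2 < x.2.1.1 ∧ x.2.1.2 < x.1.1).card
      = chainCount n [false, true, false, true, false, false] := by
  rw [← card_chainSet]
  apply Finset.card_nbij' (i := fun x => [x.1.2, x.1.1, x.2.1.2, x.2.1.1, x.2.2.2, x.2.2.1])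
    (j := fun l => ((l.getD 1 0, l.getD 0 0), ((l.getD 3 0, l.getD 2 0), (l.getD 5 0, l.getD 4 0))))
  · intro x hx
    simp only [Finset.mem_coe, Finset.mem_filter, Finset.mem_product, mem_pairsF] at hx
    simp only [Finset.mem_coe, mem_chainSet_cons_f, mem_chainSet_cons_t, mem_chainSet_nil]
    refine ⟨_, ?_, _, ⟨_, ?_, _, ⟨_, ?_, _, ⟨_, ?_, _, ⟨_, ?_, _, ⟨_, ?_, [], rfl, rfl⟩, rfl⟩, rfl⟩, rfl⟩, rfl⟩, rfl⟩ <;> omega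
  · intro l hl
    simp only [Finset.mem_coe, mem_chainSet_cons_f, mem_chainSet_cons_t, mem_chainSet_nil] at hl
    obtain ⟨x0, hx0, t0, ht0, rfl⟩ := hl
    obtain ⟨x1, hx1, t1, ht1, rfl⟩ := ht0
    obtain ⟨x2, hx2, t2, ht2, rfl⟩ := ht1
    obtain ⟨x3, hx3, t3, ht3, rfl⟩ := ht2
    obtain ⟨x4, hx4, t4, ht4, rfl⟩ := ht3
    obtain ⟨x5, hx5, t5, ht5, rfl⟩ := ht4
    subst ht5
    simp only [Finset.mem_coe, Finset.mem_filter, Finset.mem_product, mem_pairsF, List.getD]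
    norm_num
    omega
  · intro x hx; rfl
  · intro l hl
    simp only [Finset.mem_coe, mem_chainSet_cons_f, mem_chainSet_cons_t, mem_chainSet_nil] at hl
    obtain ⟨x0, hx0, t0, ht0, rfl⟩ := hl
    obtain ⟨x1, hx1, t1, ht1, rfl⟩ := ht0
    obtain ⟨x2, hx2, t2, ht2, rfl⟩ := ht1
    obtain ⟨x3, hx3, t3, ht3, rfl⟩ := ht2
    obtain ⟨x4, hx4, t4, ht4, rfl⟩ := ht3
    obtain ⟨x5, hx5, t5, ht5, rfl⟩ := ht4
    subst ht5
    rfl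

lemma c6_2 (n : ℕ) :
    ((pairsF n ×ˢ pairsF n ×ˢ pairsF n).filter fun x => x.2.2.1 ≤ x.2.1.1 ∧ x.2.1.1 ≤ x.2.2.2 ∧ x.2.2.2 ≤ x.2.1.2 ∧ x.2.1.2 < x.1.1).card
      = chainCount n [false, true, false, false, false, false] := by
  rw [← card_chainSet]
  apply Finset.card_nbij' (i := fun x => [x.1.2, x.1.1, x.2.1.2, x.2.2.2, x.2.1.1, x.2.2.1])
    (j := fun l => ((l.getD 1 0, l.getD 0 0), ((l.getD 4 0, l.getD 2 0), (l.getD 5 0, l.getD 3 0))))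
  · intro x hx
    simp only [Finset.mem_coe, Finset.mem_filter, Finset.mem_product, mem_pairsF] at hx
    simp only [Finset.mem_coe, mem_chainSet_cons_f, mem_chainSet_cons_t, mem_chainSet_nil]
    refine ⟨_, ?_, _, ⟨_, ?_, _, ⟨_, ?_, _, ⟨_, ?_, _, ⟨_, ?_, _, ⟨_, ?_, [], rfl, rfl⟩, rfl⟩, rfl⟩, rfl⟩, rfl⟩, rfl⟩ <;> omega
  · intro l hl
    simp only [Finset.mem_coe, mem_chainSet_cons_f, mem_chainSet_cons_t, mem_chainSet_nil] at hl
    obtain ⟨x0, hx0, t0, ht0, rfl⟩ := hl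
    obtain ⟨x1, hx1, t1, ht1, rfl⟩ := ht0
    obtain ⟨x2, hx2, t2, ht2, rfl⟩ := ht1
    obtain ⟨x3, hx3, t3, ht3, rfl⟩ := ht2
    obtain ⟨x4, hx4, t4, ht4, rfl⟩ := ht3
    obtain ⟨x5, hx5, t5, ht5, rfl⟩ := ht4
    subst ht5
    simp only [Finset.mem_coe, Finset.mem_filter, Finset.mem_product, mem_pairsF, List.getD]
    norm_num
    omega
  · intro x hx; rfl
  · intro l hl
    simp only [Finset.mem_coe, mem_chainSet_cons_f, mem_chainSet_cons_t, mem_chainSet_nil] at hl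
    obtain ⟨x0, hx0, t0, ht0, rfl⟩ := hl
    obtain ⟨x1, hx1, t1, ht1, rfl⟩ := ht0
    obtain ⟨x2, hx2, t2, ht2, rfl⟩ := ht1
    obtain ⟨x3, hx3, t3, ht3, rfl⟩ := ht2
    obtain ⟨x4, hx4, t4, ht4, rfl⟩ := ht3
    obtain ⟨x5, hx5, t5, ht5, rfl⟩ := ht4
    subst ht5
    rfl

lemma c6_3 (n : ℕ) :
    ((pairsF n ×ˢ pairsF n ×ˢ pairsF n).filter fun x => x.2.2.2 < x.2.1.1 ∧ x.2.1.1 ≤ x.1.1 ∧ x.1.1 ≤ x.2.1.2 ∧ x.2.1.2 ≤ x.1.2).card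
      = chainCount n [false, false, false, true, false, false] := by
  rw [← card_chainSet]
  apply Finset.card_nbij' (i := fun x => [x.1.2, x.2.1.2, x.1.1, x.2.1.1, x.2.2.2, x.2.2.1])
    (j := fun l => ((l.getD 2 0, l.getD 0 0), ((l.getD 3 0, l.getD 1 0), (l.getD 5 0, l.getD 4 0))))
  · intro x hx
    simp only [Finset.mem_coe, Finset.mem_filter, Finset.mem_product, mem_pairsF] at hx
    simp only [Finset.mem_coe, mem_chainSet_cons_f, mem_chainSet_cons_t, mem_chainSet_nil]
    refine ⟨_, ?_, _, ⟨_, ?_, _, ⟨_, ?_, _, ⟨_, ?_, _, ⟨_, ?_, _, ⟨_, ?_, [], rfl, rfl⟩, rfl⟩, rfl⟩, rfl⟩, rfl⟩, rfl⟩ <;> omega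
  · intro l hl
    simp only [Finset.mem_coe, mem_chainSet_cons_f, mem_chainSet_cons_t, mem_chainSet_nil] at hl
    obtain ⟨x0, hx0, t0, ht0, rfl⟩ := hl
    obtain ⟨x1, hx1, t1, ht1, rfl⟩ := ht0
    obtain ⟨x2, hx2, t2, ht2, rfl⟩ := ht1
    obtain ⟨x3, hx3, t3, ht3, rfl⟩ := ht2
    obtain ⟨x4, hx4, t4, ht4, rfl⟩ := ht3
    obtain ⟨x5, hx5, t5, ht5, rfl⟩ := ht4
    subst ht5
    simp only [Finset.mem_coe, Finset.mem_filter, Finset.mem_product, mem_pairsF, List.getD]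
    norm_num
    omega
  · intro x hx; rfl
  · intro l hl
    simp only [Finset.mem_coe, mem_chainSet_cons_f, mem_chainSet_cons_t, mem_chainSet_nil] at hl
    obtain ⟨x0, hx0, t0, ht0, rfl⟩ := hl
    obtain ⟨x1, hx1, t1, ht1, rfl⟩ := ht0
    obtain ⟨x2, hx2, t2, ht2, rfl⟩ := ht1
    obtain ⟨x3, hx3, t3, ht3, rfl⟩ := ht2
    obtain ⟨x4, hx4, t4, ht4, rfl⟩ := ht3
    obtain ⟨x5, hx5, t5, ht5, rfl⟩ := ht4
    subst ht5
    rfl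

lemma c6_4 (n : ℕ) :
    ((pairsF n ×ˢ pairsF n ×ˢ pairsF n).filter fun x => x.2.1.1 ≤ x.1.1 ∧ x.1.1 ≤ x.2.1.2 ∧ x.2.1.2 ≤ x.1.2 ∧ x.2.2.1 ≤ x.2.1.1 ∧ x.2.1.1 ≤ x.2.2.2 ∧ x.2.2.2 < x.1.1).card
      = chainCount n [false, false, true, false, false, false] := by
  rw [← card_chainSet]
  apply Finset.card_nbij' (i := fun x => [x.1.2, x.2.1.2, x.1.1, x.2.2.2, x.2.1.1, x.2.2.1])
    (j := fun l => ((l.getD 2 0, l.getD 0 0), ((l.getD 4 0, l.getD 1 0), (l.getD 5 0, l.getD 3 0))))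
  · intro x hx
    simp only [Finset.mem_coe, Finset.mem_filter, Finset.mem_product, mem_pairsF] at hx
    simp only [Finset.mem_coe, mem_chainSet_cons_f, mem_chainSet_cons_t, mem_chainSet_nil]
    refine ⟨_, ?_, _, ⟨_, ?_, _, ⟨_, ?_, _, ⟨_, ?_, _, ⟨_, ?_, _, ⟨_, ?_, [], rfl, rfl⟩, rfl⟩, rfl⟩, rfl⟩, rfl⟩, rfl⟩ <;> omega
  · intro l hl
    simp only [Finset.mem_coe, mem_chainSet_cons_f, mem_chainSet_cons_t, mem_chainSet_nil] at hl
    obtain ⟨x0, hx0, t0, ht0, rfl⟩ := hl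
    obtain ⟨x1, hx1, t1, ht1, rfl⟩ := ht0
    obtain ⟨x2, hx2, t2, ht2, rfl⟩ := ht1
    obtain ⟨x3, hx3, t3, ht3, rfl⟩ := ht2
    obtain ⟨x4, hx4, t4, ht4, rfl⟩ := ht3
    obtain ⟨x5, hx5, t5, ht5, rfl⟩ := ht4
    subst ht5
    simp only [Finset.mem_coe, Finset.mem_filter, Finset.mem_product, mem_pairsF, List.getD]
    norm_num
    omega
  · intro x hx; rfl
  · intro l hl
    simp only [Finset.mem_coe, mem_chainSet_cons_f, mem_chainSet_cons_t, mem_chainSet_nil] at hl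
    obtain ⟨x0, hx0, t0, ht0, rfl⟩ := hl
    obtain ⟨x1, hx1, t1, ht1, rfl⟩ := ht0
    obtain ⟨x2, hx2, t2, ht2, rfl⟩ := ht1
    obtain ⟨x3, hx3, t3, ht3, rfl⟩ := ht2
    obtain ⟨x4, hx4, t4, ht4, rfl⟩ := ht3
    obtain ⟨x5, hx5, t5, ht5, rfl⟩ := ht4
    subst ht5
    rfl

lemma c6_5 (n : ℕ) :
    ((pairsF n ×ˢ pairsF n ×ˢ pairsF n).filter fun x => x.2.1.1 ≤ x.1.1 ∧ x.1.1 ≤ x.2.1.2 ∧ x.2.1.2 ≤ x.1.2 ∧ x.2.2.1 ≤ x.2.1.1 ∧ x.2.1.1 ≤ x.2.2.2 ∧ x.2.2.2 ≤ x.2.1.2 ∧ x.1.1 ≤ x.2.2.2).card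
      = chainCount n [false, false, false, false, false, false] := by
  rw [← card_chainSet]
  apply Finset.card_nbij' (i := fun x => [x.1.2, x.2.1.2, x.2.2.2, x.1.1, x.2.1.1, x.2.2.1])
    (j := fun l => ((l.getD 3 0, l.getD 0 0), ((l.getD 4 0, l.getD 1 0), (l.getD 5 0, l.getD 2 0))))
  · intro x hx
    simp only [Finset.mem_coe, Finset.mem_filter, Finset.mem_product, mem_pairsF] at hx
    simp only [Finset.mem_coe, mem_chainSet_cons_f, mem_chainSet_cons_t, mem_chainSet_nil]
    refine ⟨_, ?_, _, ⟨_, ?_, _, ⟨_, ?_, _, ⟨_, ?_, _, ⟨_, ?_, _, ⟨_, ?_, [], rfl, rfl⟩, rfl⟩, rfl⟩, rfl⟩, rfl⟩, rfl⟩ <;> omega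
  · intro l hl
    simp only [Finset.mem_coe, mem_chainSet_cons_f, mem_chainSet_cons_t, mem_chainSet_nil] at hl
    obtain ⟨x0, hx0, t0, ht0, rfl⟩ := hl
    obtain ⟨x1, hx1, t1, ht1, rfl⟩ := ht0
    obtain ⟨x2, hx2, t2, ht2, rfl⟩ := ht1
    obtain ⟨x3, hx3, t3, ht3, rfl⟩ := ht2
    obtain ⟨x4, hx4, t4, ht4, rfl⟩ := ht3
    obtain ⟨x5, hx5, t5, ht5, rfl⟩ := ht4
    subst ht5
    simp only [Finset.mem_coe, Finset.mem_filter, Finset.mem_product, mem_pairsF, List.getD]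
    norm_num
    omega
  · intro x hx; rfl
  · intro l hl
    simp only [Finset.mem_coe, mem_chainSet_cons_f, mem_chainSet_cons_t, mem_chainSet_nil] at hl
    obtain ⟨x0, hx0, t0, ht0, rfl⟩ := hl
    obtain ⟨x1, hx1, t1, ht1, rfl⟩ := ht0
    obtain ⟨x2, hx2, t2, ht2, rfl⟩ := ht1
    obtain ⟨x3, hx3, t3, ht3, rfl⟩ := ht2
    obtain ⟨x4, hx4, t4, ht4, rfl⟩ := ht3
    obtain ⟨x5, hx5, t5, ht5, rfl⟩ := ht4
    subst ht5
    rfl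


@[simp] lemma adjOkB_some_some (p q : ℕ × ℕ) :
    adjOkB (some p) (some q) = decide (q.2 < p.1 ∨ (q.1 ≤ p.1 ∧ p.1 ≤ q.2 ∧ q.2 ≤ p.2)) := by
  rcases p with ⟨a, b⟩; rcases q with ⟨c, d⟩; rfl

@[simp] lemma adjOkB_none_left (o : Option (ℕ × ℕ)) : adjOkB none o = true := by
  rcases o with _ | ⟨a, b⟩ <;> rfl

@[simp] lemma adjOkB_none_right (o : Option (ℕ × ℕ)) : adjOkB o none = true := by
  rcases o with _ | ⟨a, b⟩ <;> rfl

@[simp] lemma acOkB_sss (p q r : ℕ × ℕ) :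
    acOkB (some p) (some q) (some r) =
      decide (r.2 < p.1 ∨ (r.1 ≤ p.1 ∧ r.2 ≤ p.2 ∧ q.1 ≤ p.1 ∧ r.2 ≤ q.2)) := by
  rcases p with ⟨a, b⟩; rcases q with ⟨c, d⟩; rcases r with ⟨e, f⟩; rfl

@[simp] lemma acOkB_sns (p r : ℕ × ℕ) :
    acOkB (some p) none (some r) = decide (r.2 < p.1) := by
  rcases p with ⟨a, b⟩; rcases r with ⟨e, f⟩; rfl

@[simp] lemma acOkB_none_left (o o' : Option (ℕ × ℕ)) : acOkB none o o' = true := by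
  rcases o with _ | ⟨a, b⟩ <;> rcases o' with _ | ⟨c, d⟩ <;> rfl

@[simp] lemma acOkB_none_right (o o' : Option (ℕ × ℕ)) : acOkB o o' none = true := by
  rcases o with _ | ⟨a, b⟩ <;> rcases o' with _ | ⟨c, d⟩ <;> rfl

lemma Hsingle (n : ℕ) : (pairsF n).card = chainCount n [false, false] := pairsF_card n

lemma H1 (n : ℕ) : (∑ x ∈ pairsF n, ∑ y ∈ pairsF n, if y.2 < x.1 then 1 else 0)
    = chainCount n [false, true, false, false] := by
  rw [sum_ite_card2]; exact c4a n

lemma H2 (n : ℕ) : (∑ x ∈ pairsF n, ∑ y ∈ pairsF n,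
      if y.2 < x.1 ∨ y.1 ≤ x.1 ∧ x.1 ≤ y.2 ∧ y.2 ≤ x.2 then 1 else 0)
    = chainCount n [false, true, false, false] + chainCount n [false, false, false, false] := by
  rw [sum_ite_card2, Finset.filter_or, Finset.card_union_of_disjoint, c4a, c4w]
  rw [Finset.disjoint_left]
  intro a ha hb
  simp only [Finset.mem_filter] at ha hb
  omega

lemma H3 (n : ℕ) : (∑ x ∈ pairsF n, ∑ y ∈ pairsF n, ∑ z ∈ pairsF n,
      if ((y.2 < x.1 ∨ y.1 ≤ x.1 ∧ x.1 ≤ y.2 ∧ y.2 ≤ x.2) ∧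
            (z.2 < y.1 ∨ z.1 ≤ y.1 ∧ y.1 ≤ z.2 ∧ z.2 ≤ y.2)) ∧
          (z.2 < x.1 ∨ z.1 ≤ x.1 ∧ z.2 ≤ x.2 ∧ y.1 ≤ x.1 ∧ z.2 ≤ y.2) then 1 else 0)
    = chainCount n [false, true, false, true, false, false]
      + chainCount n [false, true, false, false, false, false]
      + chainCount n [false, false, false, true, false, false]
      + (chainCount n [false, false, true, false, false, false]
      + chainCount n [false, false, false, false, false, false]) := by
  rw [sum_ite_card3]
  rw [Finset.filter_congr (q := fun x : (ℕ × ℕ) × (ℕ × ℕ) × ℕ × ℕ =>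
      (x.2.2.2 < x.2.1.1 ∧ x.2.1.2 < x.1.1) ∨
      ((x.2.2.1 ≤ x.2.1.1 ∧ x.2.1.1 ≤ x.2.2.2 ∧ x.2.2.2 ≤ x.2.1.2 ∧ x.2.1.2 < x.1.1) ∨
      ((x.2.2.2 < x.2.1.1 ∧ x.2.1.1 ≤ x.1.1 ∧ x.1.1 ≤ x.2.1.2 ∧ x.2.1.2 ≤ x.1.2) ∨
      ((x.2.1.1 ≤ x.1.1 ∧ x.1.1 ≤ x.2.1.2 ∧ x.2.1.2 ≤ x.1.2 ∧ x.2.2.1 ≤ x.2.1.1 ∧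
          x.2.1.1 ≤ x.2.2.2 ∧ x.2.2.2 < x.1.1) ∨
      (x.2.1.1 ≤ x.1.1 ∧ x.1.1 ≤ x.2.1.2 ∧ x.2.1.2 ≤ x.1.2 ∧ x.2.2.1 ≤ x.2.1.1 ∧
          x.2.1.1 ≤ x.2.2.2 ∧ x.2.2.2 ≤ x.2.1.2 ∧ x.1.1 ≤ x.2.2.2)))))]
  · rw [Finset.filter_or, Finset.card_union_of_disjoint]
    · rw [Finset.filter_or, Finset.card_union_of_disjoint]
      · rw [Finset.filter_or, Finset.card_union_of_disjoint]
        · rw [Finset.filter_or, Finset.card_union_of_disjoint]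
          · rw [c6_1, c6_2, c6_3, c6_4, c6_5]; ring
          · rw [Finset.disjoint_left]; intro a ha hb
            simp only [Finset.mem_filter] at ha hb; omega
        · rw [Finset.disjoint_left]; intro a ha hb
          simp only [Finset.mem_filter] at ha hb; omega
      · rw [Finset.disjoint_left]; intro a ha hb
        simp only [Finset.mem_filter] at ha hb; omega
    · rw [Finset.disjoint_left]; intro a ha hb
      simp only [Finset.mem_filter] at ha hb; omega
  · intro x hx
    simp only [Finset.mem_product, mem_pairsF] at hx
    omega

lemma Tset_card (n : ℕ) : (Tset n).card =
    1 + 3 * chainCount n [false, false] + 3 * chainCount n [false, true, false, false]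
      + 2 * chainCount n [false, false, false, false]
      + chainCount n [false, true, false, true, false, false]
      + chainCount n [false, true, false, false, false, false]
      + chainCount n [false, false, false, true, false, false]
      + chainCount n [false, false, true, false, false, false]
      + chainCount n [false, false, false, false, false, false] := by
  rw [Tset, Finset.card_filter, Finset.sum_product]
  simp only [Finset.sum_product]
  simp only [sum_osetF]
  simp only [CondB, adjOkB_some_some, adjOkB_none_left, adjOkB_none_right, acOkB_sss, acOkB_sns,
    acOkB_none_left, acOkB_none_right, Bool.and_true, Bool.true_and, Bool.and_eq_true,
    decide_eq_true_eq, if_true, Finset.sum_const, smul_eq_mul, mul_one]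
  simp only [Finset.sum_add_distrib, Finset.sum_const, smul_eq_mul, mul_one]
  rw [H1, H2, H3, ← Hsingle]
  ring


variable {n : ℕ}

def rowOf (I : Finset (Fin 3 × Fin n)) (i : Fin 3) : Finset (Fin n) :=
  Finset.univ.filter fun a => (i, a) ∈ I

lemma mem_rowOf {I : Finset (Fin 3 × Fin n)} {i : Fin 3} {a : Fin n} :
    a ∈ rowOf I i ↔ (i, a) ∈ I := by simp [rowOf]

def encR (s : Finset (Fin n)) : Option (ℕ × ℕ) :=
  if h : s.Nonempty then some (↑(s.min' h), ↑(s.max' h)) else none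

lemma encR_pos {s : Finset (Fin n)} (h : s.Nonempty) :
    encR s = some (↑(s.min' h), ↑(s.max' h)) := dif_pos h

lemma encR_neg {s : Finset (Fin n)} (h : ¬ s.Nonempty) : encR s = none := dif_neg h

def enc (I : Finset (Fin 3 × Fin n)) :
    Option (ℕ × ℕ) × Option (ℕ × ℕ) × Option (ℕ × ℕ) :=
  (encR (rowOf I 0), encR (rowOf I 1), encR (rowOf I 2))

def selD (d : Option (ℕ × ℕ) × Option (ℕ × ℕ) × Option (ℕ × ℕ)) : Fin 3 → Option (ℕ × ℕ) :=
  ![d.1, d.2.1, d.2.2]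

def decMemB (o : Option (ℕ × ℕ)) (a : Fin n) : Bool :=
  match o with
  | none => false
  | some (l, r) => decide (l ≤ (a : ℕ) ∧ (a : ℕ) ≤ r)

def decF (d : Option (ℕ × ℕ) × Option (ℕ × ℕ) × Option (ℕ × ℕ)) : Finset (Fin 3 × Fin n) :=
  Finset.univ.filter fun p => decMemB (selD d p.1) p.2 = true

lemma mem_decF {d} {p : Fin 3 × Fin n} : p ∈ decF d ↔ decMemB (selD d p.1) p.2 = true := by
  simp [decF]

lemma encR_mem_osetF (s : Finset (Fin n)) : encR s ∈ osetF n := by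
  rw [encR]; split_ifs with h
  · apply Finset.mem_insert_of_mem
    apply Finset.mem_image_of_mem
    rw [mem_pairsF]
    exact ⟨by exact_mod_cast s.min'_le _ (s.max'_mem h), (s.max' h).is_lt⟩
  · exact Finset.mem_insert_self _ _

lemma ics_adj {I : Finset (Fin 3 × Fin n)} (hI : IsIntervalClosed I) {i j : Fin 3}
    (hij : i < j) :
    adjOkB (encR (rowOf I i)) (encR (rowOf I j)) = true := by
  by_cases h1 : (rowOf I i).Nonempty
  · by_cases h2 : (rowOf I j).Nonempty
    · rw [encR_pos h1, encR_pos h2, adjOkB_some_some, decide_eq_true_eq]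
      set si := rowOf I i
      set sj := rowOf I j
      rcases Nat.lt_or_ge ((sj.max' h2 : Fin n) : ℕ) ((si.min' h1 : Fin n) : ℕ) with hc | hc
      · exact Or.inl hc
      · right
        rcases Nat.eq_or_lt_of_le hc with heq | hlt
        · refine ⟨?_, hc, ?_⟩
          · calc ((sj.min' h2 : Fin n) : ℕ) ≤ ↑(sj.max' h2) := by
                  exact_mod_cast sj.min'_le _ (sj.max'_mem h2)
              _ = _ := heq.symm
          · calc ((sj.max' h2 : Fin n) : ℕ) = ↑(si.min' h1) := heq.symm
              _ ≤ ↑(si.max' h1) := by exact_mod_cast si.min'_le _ (si.max'_mem h1)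
        · have hmemi : (i, si.min' h1) ∈ I := mem_rowOf.mp (si.min'_mem h1)
          have hmemj : (j, sj.max' h2) ∈ I := mem_rowOf.mp (sj.max'_mem h2)
          have hz1 : (j, si.min' h1) ∈ I := by
            refine hI _ hmemi _ hmemj _ ?_ ?_
            · exact Prod.mk_lt_mk.mpr (Or.inl ⟨hij, le_refl _⟩)
            · exact Prod.mk_lt_mk.mpr (Or.inr ⟨le_refl _, by rw [Fin.lt_def]; exact hlt⟩)
          have hz2 : (i, sj.max' h2) ∈ I := by
            refine hI _ hmemi _ hmemj _ ?_ ?_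
            · exact Prod.mk_lt_mk.mpr (Or.inr ⟨le_refl _, by rw [Fin.lt_def]; exact hlt⟩)
            · exact Prod.mk_lt_mk.mpr (Or.inl ⟨hij, le_refl _⟩)
          refine ⟨?_, hc, ?_⟩
          · exact_mod_cast sj.min'_le _ (mem_rowOf.mpr hz1)
          · exact_mod_cast si.le_max' _ (mem_rowOf.mpr hz2)
    · rw [encR_neg h2]; simp
  · rw [encR_neg h1]; simp

lemma ics_ac {I : Finset (Fin 3 × Fin n)} (hI : IsIntervalClosed I) :
    acOkB (encR (rowOf I 0)) (encR (rowOf I 1)) (encR (rowOf I 2)) = true := by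
  by_cases h1 : (rowOf I 0).Nonempty
  swap
  · rw [encR_neg h1]; simp
  by_cases h3 : (rowOf I 2).Nonempty
  swap
  · rw [encR_neg h3]; simp
  set s0 := rowOf I 0
  set s2 := rowOf I 2
  set a := s0.min' h1 with ha
  set b := s2.max' h3 with hb
  rcases Nat.lt_or_ge (b : ℕ) (a : ℕ) with hc | hc
  · rw [encR_pos h1, encR_pos h3]
    rcases h : encR (rowOf I 1) with _ | p
    · rw [acOkB_sns, decide_eq_true_eq]; exact hc
    · rw [acOkB_sss, decide_eq_true_eq]; exact Or.inl hc
  · have hmem0 : ((0 : Fin 3), a) ∈ I := mem_rowOf.mp (s0.min'_mem h1)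
    have hmem2 : ((2 : Fin 3), b) ∈ I := mem_rowOf.mp (s2.max'_mem h3)
    have hab : a ≤ b := by rw [Fin.le_def]; exact hc
    have hz1 : ((1 : Fin 3), a) ∈ I := by
      refine hI _ hmem0 _ hmem2 _ ?_ ?_
      · exact Prod.mk_lt_mk.mpr (Or.inl ⟨by decide, le_refl _⟩)
      · exact Prod.mk_lt_mk.mpr (Or.inl ⟨by decide, hab⟩)
    have hz2 : ((1 : Fin 3), b) ∈ I := by
      refine hI _ hmem0 _ hmem2 _ ?_ ?_
      · exact Prod.mk_lt_mk.mpr (Or.inl ⟨by decide, hab⟩)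
      · exact Prod.mk_lt_mk.mpr (Or.inl ⟨by decide, le_refl _⟩)
    have h2 : (rowOf I 1).Nonempty := ⟨a, mem_rowOf.mpr hz1⟩
    rw [encR_pos h1, encR_pos h2, encR_pos h3, acOkB_sss, decide_eq_true_eq]
    right
    refine ⟨?_, ?_, ?_, ?_⟩
    · rcases Nat.eq_or_lt_of_le hc with heq | hlt
      · calc ((s2.min' h3 : Fin n) : ℕ) ≤ ↑b := by exact_mod_cast s2.min'_le _ (s2.max'_mem h3)
          _ = ↑a := heq.symm
      · have hz : ((2 : Fin 3), a) ∈ I := by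
          refine hI _ hmem0 _ hmem2 _ ?_ ?_
          · exact Prod.mk_lt_mk.mpr (Or.inl ⟨by decide, le_refl _⟩)
          · exact Prod.mk_lt_mk.mpr (Or.inr ⟨le_refl _, by rw [Fin.lt_def]; exact hlt⟩)
        exact_mod_cast s2.min'_le _ (mem_rowOf.mpr hz)
    · rcases Nat.eq_or_lt_of_le hc with heq | hlt
      · calc ((b : Fin n) : ℕ) = ↑a := heq.symm
          _ ≤ ↑(s0.max' h1) := by exact_mod_cast s0.min'_le _ (s0.max'_mem h1)
      · have hz : ((0 : Fin 3), b) ∈ I := by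
          refine hI _ hmem0 _ hmem2 _ ?_ ?_
          · exact Prod.mk_lt_mk.mpr (Or.inr ⟨le_refl _, by rw [Fin.lt_def]; exact hlt⟩)
          · exact Prod.mk_lt_mk.mpr (Or.inl ⟨by decide, le_refl _⟩)
        exact_mod_cast s0.le_max' _ (mem_rowOf.mpr hz)
    · exact_mod_cast (rowOf I 1).min'_le _ (mem_rowOf.mpr hz1)
    · exact_mod_cast (rowOf I 1).le_max' _ (mem_rowOf.mpr hz2)


lemma mem_osetF {o : Option (ℕ × ℕ)} :
    o ∈ osetF n ↔ o = none ∨ ∃ l r, o = some (l, r) ∧ l ≤ r ∧ r < n := by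
  rcases o with _ | ⟨l, r⟩
  · simp [osetF]
  · simp [osetF, mem_pairsF, eq_comm]

lemma enc_mem_Tset {I : Finset (Fin 3 × Fin n)} (hI : IsIntervalClosed I) : enc I ∈ Tset n := by
  rw [Tset, Finset.mem_filter, Finset.mem_product, Finset.mem_product]
  refine ⟨⟨encR_mem_osetF _, encR_mem_osetF _, encR_mem_osetF _⟩, ?_⟩
  show CondB (enc I) = true
  rw [CondB, Bool.and_eq_true, Bool.and_eq_true]
  exact ⟨⟨ics_adj hI (by decide), ics_adj hI (by decide)⟩, ics_ac hI⟩

lemma decF_ics {d} (hd : d ∈ Tset n) : IsIntervalClosed (decF (n := n) d) := by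
  obtain ⟨da, db, dc⟩ := d
  rw [Tset, Finset.mem_filter, Finset.mem_product, Finset.mem_product] at hd
  obtain ⟨⟨ha, hb, hc⟩, hcond⟩ := hd
  rw [mem_osetF] at ha hb hc
  have fin3 : ∀ m : Fin 3, m = 0 ∨ m = 1 ∨ m = 2 := by decide
  intro x hx y hy z h1 h2
  obtain ⟨i, a⟩ := x; obtain ⟨j, b⟩ := y; obtain ⟨k, c⟩ := z
  rw [mem_decF] at hx hy ⊢
  rw [Prod.mk_lt_mk] at h1 h2
  simp only [Fin.lt_def, Fin.le_def] at h1 h2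
  rcases ha with rfl | ⟨la, ra, rfl, hvla, hba⟩ <;>
    rcases hb with rfl | ⟨lb, rb, rfl, hvlb, hbb⟩ <;>
    rcases hc with rfl | ⟨lc, rc, rfl, hvlc, hbc⟩ <;>
    simp only [CondB, adjOkB_some_some, adjOkB_none_left, adjOkB_none_right, acOkB_sss,
      acOkB_sns, acOkB_none_left, acOkB_none_right, Bool.and_eq_true, Bool.true_and,
      Bool.and_true, decide_eq_true_eq] at hcond <;>
    rcases fin3 i with rfl | rfl | rfl <;> rcases fin3 j with rfl | rfl | rfl <;>
      rcases fin3 k with rfl | rfl | rfl <;>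
    simp only [selD, Matrix.cons_val_zero, Matrix.cons_val_one, Matrix.head_cons,
      Matrix.cons_val_two, Matrix.tail_cons, decMemB, decide_eq_true_eq,
      Bool.false_eq_true, (show ((0 : Fin 3) : ℕ) = 0 from rfl),
      (show ((1 : Fin 3) : ℕ) = 1 from rfl),
      (show ((2 : Fin 3) : ℕ) = 2 from rfl)] at h1 h2 hx hy ⊢ <;>
    omega


lemma rowOf_convex {I : Finset (Fin 3 × Fin n)} (hI : IsIntervalClosed I) (i : Fin 3) :
    ∀ x ∈ rowOf I i, ∀ y ∈ rowOf I i, ∀ c, x ≤ c → c ≤ y → c ∈ rowOf I i := by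
  intro x hx y hy c hxc hcy
  rcases eq_or_lt_of_le hxc with rfl | hlt1
  · exact hx
  rcases eq_or_lt_of_le hcy with rfl | hlt2
  · exact hy
  exact mem_rowOf.mpr (hI _ (mem_rowOf.mp hx) _ (mem_rowOf.mp hy) (i, c)
    (Prod.mk_lt_mk.mpr (Or.inr ⟨le_refl _, hlt1⟩))
    (Prod.mk_lt_mk.mpr (Or.inr ⟨le_refl _, hlt2⟩)))

lemma decMemB_encR {s : Finset (Fin n)}
    (hconv : ∀ x ∈ s, ∀ y ∈ s, ∀ c, x ≤ c → c ≤ y → c ∈ s) (a : Fin n) :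
    decMemB (encR s) a = true ↔ a ∈ s := by
  by_cases h : s.Nonempty
  · rw [encR_pos h]
    simp only [decMemB, decide_eq_true_eq]
    constructor
    · rintro ⟨h1, h2⟩
      exact hconv _ (s.min'_mem h) _ (s.max'_mem h) a (by rwa [Fin.le_def]) (by rwa [Fin.le_def])
    · intro ha
      exact ⟨by exact_mod_cast s.min'_le _ ha, by exact_mod_cast s.le_max' _ ha⟩
  · rw [encR_neg h]
    simp only [decMemB, Bool.false_eq_true, false_iff]
    exact fun ha => h ⟨a, ha⟩

lemma decF_enc {I : Finset (Fin 3 × Fin n)} (hI : IsIntervalClosed I) : decF (enc I) = I := by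
  ext ⟨i, a⟩
  rw [mem_decF]
  have hsel : selD (enc I) i = encR (rowOf I i) := by
    fin_cases i <;> rfl
  rw [hsel, decMemB_encR (rowOf_convex hI i), mem_rowOf]

lemma encR_decRow {o : Option (ℕ × ℕ)} (ho : o ∈ osetF n) :
    encR (Finset.univ.filter fun a : Fin n => decMemB o a = true) = o := by
  rcases mem_osetF.mp ho with rfl | ⟨l, r, rfl, hlr, hrn⟩
  · rw [encR_neg]
    simp [decMemB]
  · have hln : l < n := lt_of_le_of_lt hlr hrn
    set s := Finset.univ.filter fun a : Fin n => decMemB (some (l, r)) a = true with hs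
    have hmem : ∀ a : Fin n, a ∈ s ↔ l ≤ (a : ℕ) ∧ (a : ℕ) ≤ r := by
      intro a; simp [hs, decMemB]
    have hne : s.Nonempty := ⟨⟨l, hln⟩, (hmem _).mpr (by simp [hlr])⟩
    rw [encR_pos hne]
    have hminmem := (hmem _).mp (s.min'_mem hne)
    have hmaxmem := (hmem _).mp (s.max'_mem hne)
    have h1 : ((s.min' hne : Fin n) : ℕ) = l := by
      have := s.min'_le ⟨l, hln⟩ ((hmem _).mpr (by simp [hlr]))
      rw [Fin.le_def] at this
      simp at this
      omega
    have h2 : ((s.max' hne : Fin n) : ℕ) = r := by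
      have := s.le_max' ⟨r, hrn⟩ ((hmem _).mpr (by simp [hlr]))
      rw [Fin.le_def] at this
      simp at this
      omega
    rw [h1, h2]

lemma enc_decF {d} (hd : d ∈ Tset n) : enc (decF (n := n) d) = d := by
  obtain ⟨da, db, dc⟩ := d
  rw [Tset, Finset.mem_filter, Finset.mem_product, Finset.mem_product] at hd
  obtain ⟨⟨ha, hb, hc⟩, -⟩ := hd
  have hrow : ∀ i : Fin 3, rowOf (decF (n := n) (da, db, dc)) i =
      Finset.univ.filter fun a : Fin n => decMemB (selD (da, db, dc) i) a = true := by
    intro i; ext a; simp [rowOf, mem_decF]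
  rw [enc, hrow 0, hrow 1, hrow 2]
  show (encR (Finset.univ.filter fun a : Fin n => decMemB da a = true),
        encR (Finset.univ.filter fun a : Fin n => decMemB db a = true),
        encR (Finset.univ.filter fun a : Fin n => decMemB dc a = true)) = _
  rw [encR_decRow ha, encR_decRow hb, encR_decRow hc]

lemma stageA (n : ℕ) [DecidablePred fun I : Finset (Fin 3 × Fin n) => IsIntervalClosed I] :
    ((Finset.univ : Finset (Finset (Fin 3 × Fin n))).filter
        fun I => IsIntervalClosed I).card = (Tset n).card := by
  apply Finset.card_nbij' (i := fun I => enc I) (j := fun d => decF d)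
  · intro I hI
    exact enc_mem_Tset (Finset.mem_filter.mp hI).2
  · intro d hd
    exact Finset.mem_filter.mpr ⟨Finset.mem_univ _, decF_ics hd⟩
  · intro I hI
    exact decF_enc (Finset.mem_filter.mp hI).2
  · intro d hd
    exact enc_decF hd

lemma count_poly (n : ℕ) : 144 * (Tset n).card =
    n ^ 6 + 9 * n ^ 5 + 61 * n ^ 4 + 159 * n ^ 3 + 370 * n ^ 2 + 264 * n + 144 := by
  have h1 := ch_ff n
  have h2 := ch_ftff n
  have h3 := ch_ffff n
  have h4 := ch_ftftff n
  have h5 := ch_ftffff n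
  have h6 := ch_ffftff n
  have h7 := ch_fftfff n
  have h8 := ch_ffffff n
  have hT := Tset_card n
  have hz : ((144 * (Tset n).card : ℕ) : ℤ) =
      ((n ^ 6 + 9 * n ^ 5 + 61 * n ^ 4 + 159 * n ^ 3 + 370 * n ^ 2 + 264 * n + 144 : ℕ) : ℤ) := by
    apply mul_left_cancel₀ (show (720 : ℤ) ≠ 0 by norm_num)
    push_cast [hT]
    linear_combination 155520 * h1 + 12960 * h2 + 8640 * h3 + 144 * (h4 + h5 + h6 + h7 + h8)
  exact_mod_cast hz

end ICS3

/-- The number of interval-closed sets of `[3] × [n]` is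
`(n⁶ + 9n⁵ + 61n⁴ + 159n³ + 370n² + 264n + 144)/144` (denominator cleared). -/
theorem card_ics_three_times_n (n : ℕ) :
    144 * Nat.card {I : Finset (Fin 3 × Fin n) // IsIntervalClosed I} =
      n ^ 6 + 9 * n ^ 5 + 61 * n ^ 4 + 159 * n ^ 3 + 370 * n ^ 2 + 264 * n + 144 := by
  classical
  rw [Nat.card_eq_fintype_card, Fintype.card_subtype, ICS3.stageA n, ICS3.count_poly n]
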